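/- arXiv:1710.11524 — 3 statements merged into one kernel-verified Lean document; each statement's English description precedes it below -/
import Mathlib

section
/- For every m ≥ 0 there is a constant C > 0 such that for all nonzero ξ, η ∈ ℝ³ and every sign θ ∈ {+1,−1}: (i) the operator norm of Π_θᵐ(ξ)·Π_{−θ}ᵐ(η) (as an operator on ℂ⁴) is at most C·(∠(ξ,η) + ⟨ξ⟩ₘ⁻¹ + ⟨η⟩ₘ⁻¹), and (ii) the operator norm of Π_θᵐ(ξ)·Π_θᵐ(η) is at most C·(∠(−ξ,η) + ⟨ξ⟩ₘ⁻¹ + ⟨η⟩ₘ⁻¹). -/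
noncomputable section
open Matrix Complex MeasureTheory

/-- ℝ³ with the Euclidean norm. -/
abbrev E3 := EuclideanSpace ℝ (Fin 3)

/-- The Dirac matrix β = [[I₂,0],[0,−I₂]]. -/
def diracBeta : Matrix (Fin 4) (Fin 4) ℂ :=
  !![1,0,0,0; 0,1,0,0; 0,0,-1,0; 0,0,0,-1]

/-- The Dirac matrices αʲ = [[0,σʲ],[σʲ,0]] built from the Pauli matrices. -/
def diracAlpha : Fin 3 → Matrix (Fin 4) (Fin 4) ℂ :=
  ![!![0,0,0,1; 0,0,1,0; 0,1,0,0; 1,0,0,0],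
    !![0,0,0,-Complex.I; 0,0,Complex.I,0; 0,-Complex.I,0,0; Complex.I,0,0,0],
    !![0,0,1,0; 0,0,0,-1; 1,0,0,0; 0,-1,0,0]]

/-- ξ·α = ξ₁α¹ + ξ₂α² + ξ₃α³. -/
def xiAlpha (ξ : E3) : Matrix (Fin 4) (Fin 4) ℂ := ∑ j, (ξ j : ℂ) • diracAlpha j

/-- The Dirac symbol ξ·α + mβ. -/
def diracSym (m : ℝ) (ξ : E3) : Matrix (Fin 4) (Fin 4) ℂ :=
  xiAlpha ξ + (m : ℂ) • diracBeta

/-- ⟨ξ⟩ₘ = (m² + |ξ|²)^(1/2). -/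
def bracket (m : ℝ) (ξ : E3) : ℝ := Real.sqrt (m ^ 2 + ‖ξ‖ ^ 2)

/-- The projection Π_θᵐ(ξ) = (1/2)[I₄ + θ⟨ξ⟩ₘ⁻¹(ξ·α + mβ)], for θ = ±1. -/
def proj (m θ : ℝ) (ξ : E3) : Matrix (Fin 4) (Fin 4) ℂ :=
  (1/2 : ℂ) • ((1 : Matrix (Fin 4) (Fin 4) ℂ)
    + ((θ : ℂ) * ((bracket m ξ : ℝ) : ℂ)⁻¹) • diracSym m ξ)

/-- The propagator symbol Uₘ(t,ξ) = cos(t⟨ξ⟩ₘ)·I₄ − i⟨ξ⟩ₘ⁻¹ sin(t⟨ξ⟩ₘ)·(ξ·α + mβ). -/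
def Uprop (m t : ℝ) (ξ : E3) : Matrix (Fin 4) (Fin 4) ℂ :=
  ((Real.cos (t * bracket m ξ) : ℝ) : ℂ) • (1 : Matrix (Fin 4) (Fin 4) ℂ) -
    (Complex.I * ((bracket m ξ : ℝ) : ℂ)⁻¹ * ((Real.sin (t * bracket m ξ) : ℝ) : ℂ))
      • diracSym m ξ

/-! ### Auxiliary machinery -/

open scoped Matrix.Norms.L2Operator

set_option maxHeartbeats 1600000

/-- A general Dirac symbol w·α + μβ. -/
def diracGen (w : E3) (μ : ℝ) : Matrix (Fin 4) (Fin 4) ℂ := xiAlpha w + (μ : ℂ) • diracBeta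

lemma diracSym_eq_diracGen (m : ℝ) (ξ : E3) : diracSym m ξ = diracGen ξ m := rfl

lemma diracGen_eq (w : E3) (μ : ℝ) :
    diracGen w μ =
      !![(μ:ℂ), 0, (w 2 : ℝ), (w 0 : ℝ) - Complex.I * (w 1 : ℝ);
         0, (μ:ℂ), (w 0 : ℝ) + Complex.I * (w 1 : ℝ), -(w 2 : ℝ);
         (w 2 : ℝ), (w 0 : ℝ) - Complex.I * (w 1 : ℝ), -(μ:ℂ), 0;
         (w 0 : ℝ) + Complex.I * (w 1 : ℝ), -(w 2 : ℝ), 0, -(μ:ℂ)] := by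
  ext i j
  fin_cases i <;> fin_cases j <;>
    simp [diracGen, xiAlpha, diracAlpha, diracBeta, Fin.sum_univ_three, Matrix.sum_apply,
      Matrix.cons_val_zero, Matrix.cons_val_one, Matrix.head_cons, Matrix.head_fin_const,
      Matrix.cons_val_two, Matrix.cons_val_three, Matrix.vecHead, Matrix.vecTail,
      Function.comp] <;> try ring

lemma diracGen_herm (w : E3) (μ : ℝ) : (diracGen w μ)ᴴ = diracGen w μ := by
  rw [diracGen_eq]
  ext i j
  fin_cases i <;> fin_cases j <;>
    simp [Matrix.conjTranspose_apply, Matrix.cons_val_zero, Matrix.cons_val_one,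
      Matrix.head_cons, Matrix.head_fin_const, Matrix.cons_val_two, Matrix.cons_val_three,
      Matrix.vecHead, Matrix.vecTail, Function.comp, Complex.conj_ofReal] <;> try ring

lemma diracGen_sq (w : E3) (μ : ℝ) :
    diracGen w μ * diracGen w μ = ((μ ^ 2 + ‖w‖ ^ 2 : ℝ) : ℂ) • 1 := by
  have hn : (‖w‖ : ℝ) ^ 2 = w 0 ^ 2 + w 1 ^ 2 + w 2 ^ 2 := by
    rw [EuclideanSpace.norm_eq, Real.sq_sqrt (by positivity)]
    simp [Fin.sum_univ_three]; try ring
  rw [diracGen_eq]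
  ext i j
  fin_cases i <;> fin_cases j <;>
    simp [Matrix.mul_apply, Fin.sum_univ_four, Matrix.one_apply, hn, Matrix.cons_val_zero,
      Matrix.cons_val_one, Matrix.head_cons, Matrix.head_fin_const, Matrix.cons_val_two,
      Matrix.cons_val_three, Matrix.vecHead, Matrix.vecTail, Function.comp] <;>
    (try push_cast) <;> (try ring_nf) <;> (try simp [Complex.I_sq]) <;> try ring

lemma diracGen_smul (r : ℝ) (w : E3) (μ : ℝ) :
    ((r : ℝ) : ℂ) • diracGen w μ = diracGen (r • w) (r * μ) := by
  unfold diracGen xiAlpha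
  rw [smul_add, Finset.smul_sum, smul_smul]
  congr 1
  · refine Finset.sum_congr rfl fun j _ => ?_
    have hrw : (r • w) j = r * w j := rfl
    rw [hrw, smul_smul]
    push_cast
    ring_nf
  · push_cast
    ring_nf

lemma diracGen_add (w w' : E3) (μ μ' : ℝ) :
    diracGen w μ + diracGen w' μ' = diracGen (w + w') (μ + μ') := by
  unfold diracGen xiAlpha
  have h : ∀ j : Fin 3, ((w + w') j : ℂ) = (w j : ℂ) + (w' j : ℂ) := by
    intro j; have : (w + w') j = w j + w' j := rfl
    rw [this]; push_cast; ring
  simp only [h, add_smul, Finset.sum_add_distrib]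
  push_cast
  rw [add_smul]
  abel

/-- The ℓ²-operator norm of a Hermitian matrix squaring to `r² • 1` is `r`. -/
lemma l2norm_of_sq (M : Matrix (Fin 4) (Fin 4) ℂ) (hH : Mᴴ = M) (r : ℝ) (hr : 0 ≤ r)
    (hsq : M * M = ((r ^ 2 : ℝ) : ℂ) • 1) : ‖M‖ = r := by
  have h1 : ‖M‖ * ‖M‖ = ‖star M * M‖ := (CStarRing.norm_star_mul_self).symm
  rw [Matrix.star_eq_conjTranspose, hH, hsq] at h1
  have h2 : ‖((r ^ 2 : ℝ) : ℂ) • (1 : Matrix (Fin 4) (Fin 4) ℂ)‖ = r ^ 2 := by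
    rw [norm_smul, CStarRing.norm_one]
    simp [_root_.abs_of_nonneg (sq_nonneg r)]
  rw [h2] at h1
  nlinarith [norm_nonneg M]

lemma norm_diracGen (w : E3) (μ : ℝ) :
    ‖diracGen w μ‖ = Real.sqrt (μ ^ 2 + ‖w‖ ^ 2) := by
  refine l2norm_of_sq _ (diracGen_herm w μ) _ (Real.sqrt_nonneg _) ?_
  rw [Real.sq_sqrt (by positivity), diracGen_sq]

lemma bracket_pos (m : ℝ) (ξ : E3) (hξ : ξ ≠ 0) : 0 < bracket m ξ := by
  have h := norm_pos_iff.mpr hξ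
  exact Real.sqrt_pos.mpr (by nlinarith [sq_nonneg m])

lemma bracket_sq (m : ℝ) (ξ : E3) : (bracket m ξ) ^ 2 = m ^ 2 + ‖ξ‖ ^ 2 :=
  Real.sq_sqrt (by positivity)

lemma norm_le_bracket (m : ℝ) (ξ : E3) : ‖ξ‖ ≤ bracket m ξ := by
  have h1 := bracket_sq m ξ
  have h2 : 0 ≤ bracket m ξ := Real.sqrt_nonneg _
  have h3 := norm_nonneg ξ
  nlinarith [sq_nonneg m]

lemma bracket_le_add (m : ℝ) (hm : 0 ≤ m) (ξ : E3) : bracket m ξ ≤ m + ‖ξ‖ := by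
  have : m ^ 2 + ‖ξ‖ ^ 2 ≤ (m + ‖ξ‖) ^ 2 := by nlinarith [norm_nonneg ξ]
  calc bracket m ξ ≤ Real.sqrt ((m + ‖ξ‖) ^ 2) := Real.sqrt_le_sqrt this
    _ = m + ‖ξ‖ := Real.sqrt_sq (by positivity)

/-- For unit vectors, `‖u - v‖` is at most the angle between them. -/
lemma norm_sub_unit_le_angle (u v : E3) (hu : ‖u‖ = 1) (hv : ‖v‖ = 1) :
    ‖u - v‖ ≤ InnerProductGeometry.angle u v := by
  have h0 : 0 ≤ InnerProductGeometry.angle u v := InnerProductGeometry.angle_nonneg u v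
  have hcos : Real.cos (InnerProductGeometry.angle u v) = (inner ℝ u v : ℝ) := by
    rw [InnerProductGeometry.cos_angle, hu, hv]; simp
  have hsq : ‖u - v‖ ^ 2 = 2 - 2 * Real.cos (InnerProductGeometry.angle u v) := by
    rw [norm_sub_sq_real, hu, hv, hcos]; ring
  set t := InnerProductGeometry.angle u v with ht
  have h1 : Real.sin (t / 2) ^ 2 ≤ (t / 2) ^ 2 := Real.sin_sq_le_sq
  have h2 : Real.cos (t / 2) ^ 2 = 1 / 2 + Real.cos t / 2 := by
    have := Real.cos_sq (t / 2)
    rwa [show 2 * (t / 2) = t by ring] at this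
  have h3 := Real.sin_sq_add_cos_sq (t / 2)
  nlinarith [norm_nonneg (u - v), sq_nonneg (t - ‖u - v‖), sq_nonneg (t + ‖u - v‖)]

/-- The key vector estimate. -/
lemma key_vec (m : ℝ) (hm : 0 ≤ m) (ξ η : E3) (hξ : ξ ≠ 0) (hη : η ≠ 0) :
    ‖(bracket m ξ)⁻¹ • ξ - (bracket m η)⁻¹ • η‖
      ≤ InnerProductGeometry.angle ξ η + m * ((bracket m ξ)⁻¹ + (bracket m η)⁻¹) := by
  have hnξ : 0 < ‖ξ‖ := norm_pos_iff.mpr hξ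
  have hnη : 0 < ‖η‖ := norm_pos_iff.mpr hη
  have ha : 0 < bracket m ξ := bracket_pos m ξ hξ
  have hb : 0 < bracket m η := bracket_pos m η hη
  set a := bracket m ξ with hadef
  set b := bracket m η with hbdef
  set u : E3 := ‖ξ‖⁻¹ • ξ with hudef
  set v : E3 := ‖η‖⁻¹ • η with hvdef
  have hu : ‖u‖ = 1 := by
    rw [hudef, norm_smul, Real.norm_eq_abs, abs_of_pos (inv_pos.mpr hnξ)]
    field_simp
  have hv : ‖v‖ = 1 := by
    rw [hvdef, norm_smul, Real.norm_eq_abs, abs_of_pos (inv_pos.mpr hnη)]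
    field_simp
  have hdecomp : a⁻¹ • ξ - b⁻¹ • η
      = (‖ξ‖ * a⁻¹) • (u - v) + ((‖ξ‖ * a⁻¹) - (‖η‖ * b⁻¹)) • v := by
    rw [hudef, hvdef]
    match_scalars <;> field_simp <;> ring
  have hangle : InnerProductGeometry.angle u v = InnerProductGeometry.angle ξ η := by
    rw [hudef, hvdef, InnerProductGeometry.angle_smul_left_of_pos _ _ (inv_pos.mpr hnξ),
      InnerProductGeometry.angle_smul_right_of_pos _ _ (inv_pos.mpr hnη)]
  have huv : ‖u - v‖ ≤ InnerProductGeometry.angle ξ η := by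
    rw [← hangle]; exact norm_sub_unit_le_angle u v hu hv
  have hs1 : ‖ξ‖ * a⁻¹ ≤ 1 := by
    rw [← div_eq_mul_inv, div_le_one ha]; exact norm_le_bracket m ξ
  have ht1 : ‖η‖ * b⁻¹ ≤ 1 := by
    rw [← div_eq_mul_inv, div_le_one hb]; exact norm_le_bracket m η
  have hs0 : 0 ≤ ‖ξ‖ * a⁻¹ := by positivity
  have ht0 : 0 ≤ ‖η‖ * b⁻¹ := by positivity
  have hs2 : 1 - ‖ξ‖ * a⁻¹ ≤ m * a⁻¹ := by
    have h1 : a ≤ m + ‖ξ‖ := bracket_le_add m hm ξ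
    have h2 : a * a⁻¹ = 1 := mul_inv_cancel₀ ha.ne'
    nlinarith [inv_pos.mpr ha]
  have ht2 : 1 - ‖η‖ * b⁻¹ ≤ m * b⁻¹ := by
    have h1 : b ≤ m + ‖η‖ := bracket_le_add m hm η
    have h2 : b * b⁻¹ = 1 := mul_inv_cancel₀ hb.ne'
    nlinarith [inv_pos.mpr hb]
  have habs : |(‖ξ‖ * a⁻¹) - (‖η‖ * b⁻¹)| ≤ m * a⁻¹ + m * b⁻¹ := by
    rw [abs_sub_le_iff]
    constructor <;> linarith
  calc ‖a⁻¹ • ξ - b⁻¹ • η‖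
      ≤ ‖(‖ξ‖ * a⁻¹) • (u - v)‖ + ‖((‖ξ‖ * a⁻¹) - (‖η‖ * b⁻¹)) • v‖ := by
        rw [hdecomp]; exact norm_add_le _ _
    _ = (‖ξ‖ * a⁻¹) * ‖u - v‖ + |(‖ξ‖ * a⁻¹) - (‖η‖ * b⁻¹)| := by
        rw [norm_smul, norm_smul, hv, Real.norm_eq_abs, Real.norm_eq_abs, _root_.abs_of_nonneg hs0,
          mul_one]
    _ ≤ 1 * InnerProductGeometry.angle ξ η + (m * a⁻¹ + m * b⁻¹) := by
        have h5 : (‖ξ‖ * a⁻¹) * ‖u - v‖ ≤ 1 * InnerProductGeometry.angle ξ η := by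
          apply mul_le_mul hs1 huv (norm_nonneg _) (by norm_num)
        linarith [habs]
    _ ≤ InnerProductGeometry.angle ξ η + m * (a⁻¹ + b⁻¹) := le_of_eq (by ring)

/-- Master estimate for products of two projections. -/
lemma master (m : ℝ) (hm : 0 ≤ m) (θ θ' : ℝ) (hθ : θ = 1 ∨ θ = -1) (hθ' : θ' = 1 ∨ θ' = -1)
    (ξ η η'' : E3) (hξ : ξ ≠ 0) (hη : η ≠ 0) (hee : η'' = (-(θ * θ')) • η) :
    ‖proj m θ ξ * proj m θ' η‖
      ≤ (m + 1) * (InnerProductGeometry.angle ξ η'' + (bracket m ξ)⁻¹ + (bracket m η)⁻¹) := by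
  have ha : 0 < bracket m ξ := bracket_pos m ξ hξ
  have hb : 0 < bracket m η := bracket_pos m η hη
  set a := bracket m ξ with hadef
  set b := bracket m η with hbdef
  have hθabs : |θ| = 1 := by rcases hθ with h | h <;> rw [h] <;> norm_num
  have hθ'abs : |θ'| = 1 := by rcases hθ' with h | h <;> rw [h] <;> norm_num
  have hθsq : θ ^ 2 = 1 := by rcases hθ with h | h <;> rw [h] <;> norm_num
  set A : Matrix (Fin 4) (Fin 4) ℂ := ((θ * a⁻¹ : ℝ) : ℂ) • diracSym m ξ with hAdef
  set X : Matrix (Fin 4) (Fin 4) ℂ := ((θ' * b⁻¹ : ℝ) : ℂ) • diracSym m η with hXdef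
  have hPA : proj m θ ξ = (1/2 : ℂ) • (1 + A) := by
    rw [proj, hAdef, ← hadef]
    push_cast
    ring_nf
  have hPX : proj m θ' η = (1/2 : ℂ) • (1 + X) := by
    rw [proj, hXdef, ← hbdef]
    push_cast
    ring_nf
  have hA : A = diracGen ((θ * a⁻¹) • ξ) ((θ * a⁻¹) * m) := by
    rw [hAdef, diracSym_eq_diracGen, diracGen_smul]
  have hX : X = diracGen ((θ' * b⁻¹) • η) ((θ' * b⁻¹) * m) := by
    rw [hXdef, diracSym_eq_diracGen, diracGen_smul]
  have hscalξ : ((θ * a⁻¹) * m) ^ 2 + ‖(θ * a⁻¹) • ξ‖ ^ 2 = 1 := by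
    rw [norm_smul, Real.norm_eq_abs]
    have e1 : (θ * a⁻¹ * m) ^ 2 = a⁻¹ ^ 2 * m ^ 2 := by
      rw [mul_pow, mul_pow, hθsq, one_mul]
    have e2 : (|θ * a⁻¹| * ‖ξ‖) ^ 2 = a⁻¹ ^ 2 * ‖ξ‖ ^ 2 := by
      rw [mul_pow, _root_.sq_abs, mul_pow, hθsq, one_mul]
    rw [e1, e2, ← mul_add, ← bracket_sq m ξ, ← mul_pow, inv_mul_cancel₀ ha.ne', one_pow]
  have hAA : A * A = 1 := by
    rw [hA, diracGen_sq, hscalξ]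
    norm_num
  have hnA : ‖A‖ = 1 := by
    rw [hA, norm_diracGen, hscalξ, Real.sqrt_one]
  have hn1A : ‖1 + A‖ ≤ 2 := by
    calc ‖(1 : Matrix (Fin 4) (Fin 4) ℂ) + A‖ ≤ ‖(1 : Matrix (Fin 4) (Fin 4) ℂ)‖ + ‖A‖ :=
          norm_add_le _ _
      _ ≤ 2 := by rw [CStarRing.norm_one, hnA]; norm_num
  have hkey : (1 + A) * (1 + X) = (1 + A) * (A + X) := by
    rw [mul_add, mul_add, mul_one]
    congr 1
    rw [add_mul, one_mul, hAA, add_comm]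
  have hprod : proj m θ ξ * proj m θ' η = (1/4 : ℂ) • ((1 + A) * (A + X)) := by
    rw [hPA, hPX, Matrix.smul_mul, Matrix.mul_smul, smul_smul, hkey]
    norm_num
  -- treat A + X as a single Dirac symbol
  have hAX : A + X = diracGen ((θ * a⁻¹) • ξ + (θ' * b⁻¹) • η)
      ((θ * a⁻¹) * m + (θ' * b⁻¹) * m) := by
    rw [hA, hX, diracGen_add]
  have hη'' : η'' ≠ 0 := by
    rw [hee]
    refine smul_ne_zero ?_ hη
    intro h
    have : |(-(θ * θ'))| = 0 := by rw [h]; exact abs_zero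
    rw [abs_neg, abs_mul, hθabs, hθ'abs] at this
    norm_num at this
  have hbr'' : bracket m η'' = b := by
    rw [hbdef, bracket, bracket, hee, norm_smul, Real.norm_eq_abs, abs_neg, abs_mul,
      hθabs, hθ'abs, one_mul, one_mul]
  have hw : (θ * a⁻¹) • ξ + (θ' * b⁻¹) • η = θ • (a⁻¹ • ξ - b⁻¹ • η'') := by
    rw [hee]
    match_scalars
    · ring
    · rcases hθ with h | h <;> rw [h] <;> ring
  have hwnorm : ‖(θ * a⁻¹) • ξ + (θ' * b⁻¹) • η‖ = ‖a⁻¹ • ξ - b⁻¹ • η''‖ := by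
    rw [hw, norm_smul, Real.norm_eq_abs, hθabs, one_mul]
  have hvec : ‖a⁻¹ • ξ - b⁻¹ • η''‖
      ≤ InnerProductGeometry.angle ξ η'' + m * (a⁻¹ + b⁻¹) := by
    have := key_vec m hm ξ η'' hξ hη''
    rwa [hbr''] at this
  have hmu : |(θ * a⁻¹) * m + (θ' * b⁻¹) * m| ≤ m * a⁻¹ + m * b⁻¹ := by
    calc |(θ * a⁻¹) * m + (θ' * b⁻¹) * m| ≤ |(θ * a⁻¹) * m| + |(θ' * b⁻¹) * m| := abs_add_le _ _
      _ = m * a⁻¹ + m * b⁻¹ := by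
          rw [abs_mul, abs_mul, abs_mul, abs_mul, hθabs, hθ'abs,
            _root_.abs_of_pos (inv_pos.mpr ha), _root_.abs_of_pos (inv_pos.mpr hb), _root_.abs_of_nonneg hm]
          ring
  have hnAX : ‖A + X‖ ≤ m * a⁻¹ + m * b⁻¹ + (InnerProductGeometry.angle ξ η'' + m * (a⁻¹ + b⁻¹)) := by
    rw [hAX, norm_diracGen]
    set μ₀ := (θ * a⁻¹) * m + (θ' * b⁻¹) * m
    set w₀ := (θ * a⁻¹) • ξ + (θ' * b⁻¹) • η
    have hsq : μ₀ ^ 2 + ‖w₀‖ ^ 2 ≤ (|μ₀| + ‖w₀‖) ^ 2 := by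
      nlinarith [abs_nonneg μ₀, norm_nonneg w₀, _root_.sq_abs μ₀]
    calc Real.sqrt (μ₀ ^ 2 + ‖w₀‖ ^ 2) ≤ Real.sqrt ((|μ₀| + ‖w₀‖) ^ 2) := Real.sqrt_le_sqrt hsq
      _ = |μ₀| + ‖w₀‖ := Real.sqrt_sq (by positivity)
      _ ≤ (m * a⁻¹ + m * b⁻¹) + (InnerProductGeometry.angle ξ η'' + m * (a⁻¹ + b⁻¹)) := by
          have h2 : ‖w₀‖ ≤ InnerProductGeometry.angle ξ η'' + m * (a⁻¹ + b⁻¹) := by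
            rw [hwnorm]; exact hvec
          exact add_le_add hmu h2
  have hquarter : ‖(1/4 : ℂ)‖ = 1/4 := by
    norm_num
  have hfinal : ‖proj m θ ξ * proj m θ' η‖ ≤ (1/4) * (2 * ‖A + X‖) := by
    rw [hprod, norm_smul, hquarter]
    have h := norm_mul_le (1 + A) (A + X)
    have h2 : ‖(1 + A) * (A + X)‖ ≤ 2 * ‖A + X‖ := by
      calc ‖(1 + A) * (A + X)‖ ≤ ‖1 + A‖ * ‖A + X‖ := norm_mul_le _ _
        _ ≤ 2 * ‖A + X‖ := by gcongr
      -- note: gcongr needs 0 ≤ ‖A + X‖, automatic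
    linarith [norm_nonneg ((1 + A) * (A + X))]
  have hang : 0 ≤ InnerProductGeometry.angle ξ η'' := InnerProductGeometry.angle_nonneg _ _
  have hia : 0 < a⁻¹ := inv_pos.mpr ha
  have hib : 0 < b⁻¹ := inv_pos.mpr hb
  calc ‖proj m θ ξ * proj m θ' η‖ ≤ (1/4) * (2 * ‖A + X‖) := hfinal
    _ ≤ (1/4) * (2 * (m * a⁻¹ + m * b⁻¹ + (InnerProductGeometry.angle ξ η'' + m * (a⁻¹ + b⁻¹)))) := by
        gcongr
    _ ≤ (m + 1) * (InnerProductGeometry.angle ξ η'' + a⁻¹ + b⁻¹) := by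
        nlinarith [mul_nonneg hm hang, mul_nonneg hm hia.le, mul_nonneg hm hib.le]

/-- operator-norm bounds for products of the projections, in terms
of the angle between the frequencies and the inverse brackets. -/
theorem proj_mul_proj_opNorm_bound (m : ℝ) (hm : 0 ≤ m) :
    ∃ C > 0, ∀ θ : ℝ, (θ = 1 ∨ θ = -1) → ∀ ξ η : E3, ξ ≠ 0 → η ≠ 0 →
      ‖Matrix.toEuclideanCLM (𝕜 := ℂ) (proj m θ ξ * proj m (-θ) η)‖
          ≤ C * (InnerProductGeometry.angle ξ η + (bracket m ξ)⁻¹ + (bracket m η)⁻¹) ∧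
      ‖Matrix.toEuclideanCLM (𝕜 := ℂ) (proj m θ ξ * proj m θ η)‖
          ≤ C * (InnerProductGeometry.angle (-ξ) η + (bracket m ξ)⁻¹ + (bracket m η)⁻¹) := by
  refine ⟨m + 1, by linarith, fun θ hθ ξ η hξ hη => ?_⟩
  have hθ' : -θ = 1 ∨ -θ = -1 := by rcases hθ with h | h <;> rw [h] <;> norm_num
  constructor
  · have hee : η = (-(θ * -θ)) • η := by
      rcases hθ with h | h <;> rw [h] <;> norm_num
    have h := master m hm θ (-θ) hθ hθ' ξ η η hξ hη hee
    rw [← Matrix.cstar_norm_def]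
    exact h
  · have hee : -η = (-(θ * θ)) • η := by
      rcases hθ with h | h <;> rw [h] <;> module
    have h := master m hm θ θ hθ hθ ξ η (-η) hξ hη hee
    have hangle : InnerProductGeometry.angle ξ (-η) = InnerProductGeometry.angle (-ξ) η := by
      rw [InnerProductGeometry.angle_neg_right, InnerProductGeometry.angle_neg_left]
    rw [← Matrix.cstar_norm_def]
    rw [hangle] at h
    exact h
end
end

section
/- (Lower bound on the real part of the propagator product, used in the ill-posedness argument.) Let m ≥ 0 and 0 < ε ≤ 1/10. There exist constants c > 0 and Λ ≥ 1 such that for all λ ≥ Λ, all ξ, η ∈ ℝ³ with λ ≤ |ξ| ≤ 2λ and λ ≤ |η| ≤ 2λ, and all t, τ ∈ ℝ with |t| ≤ ε/λ and |τ| ≤ ε/λ, the (1,1) entry of the 4×4 matrix Uₘ(τ,ξ) · β · Uₘ(t,η) has real part at least c: Re [Uₘ(τ,ξ) β Uₘ(t,η)]₁₁ ≥ c. -/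
noncomputable section
open Matrix Complex MeasureTheory

lemma entry_re_eq (m τ t : ℝ) (ξ η : E3) :
    ((Uprop m τ ξ * diracBeta * Uprop m t η) 0 0).re =
    Real.cos (τ * bracket m ξ) * Real.cos (t * bracket m η)
      + (bracket m ξ)⁻¹ * (bracket m η)⁻¹ * Real.sin (τ * bracket m ξ)
        * Real.sin (t * bracket m η)
        * (ξ 0 * η 0 + ξ 1 * η 1 + ξ 2 * η 2 - m ^ 2) := by
  simp [Uprop, diracSym, xiAlpha, diracBeta, diracAlpha, Matrix.mul_apply,
    Fin.sum_univ_four, Fin.sum_univ_three, Matrix.sum_apply, Matrix.smul_apply,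
    Matrix.one_apply, Matrix.vecHead, Matrix.vecTail, Complex.ext_iff,
    -Complex.ofReal_cos, -Complex.ofReal_sin]
  ring

set_option maxHeartbeats 2000000 in
theorem propagator_product_re_lower_bound (m : ℝ) (hm : 0 ≤ m)
    (ε : ℝ) (hε : 0 < ε) (hε' : ε ≤ 1 / 10) :
    ∃ c > (0 : ℝ), ∃ Λ : ℝ, 1 ≤ Λ ∧
      ∀ lam : ℝ, Λ ≤ lam → ∀ ξ η : E3,
        lam ≤ ‖ξ‖ → ‖ξ‖ ≤ 2 * lam → lam ≤ ‖η‖ → ‖η‖ ≤ 2 * lam →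
        ∀ t τ : ℝ, |t| ≤ ε / lam → |τ| ≤ ε / lam →
        c ≤ ((Uprop m τ ξ * diracBeta * Uprop m t η) 0 0).re := by
  refine ⟨1/2, by norm_num, max 1 m, le_max_left _ _, ?_⟩
  intro lam hΛ ξ η hξ1 hξ2 hη1 hη2 t τ ht hτ
  have hlam1 : (1 : ℝ) ≤ lam := le_trans (le_max_left _ _) hΛ
  have hmlam : m ≤ lam := le_trans (le_max_right _ _) hΛ
  have hlam0 : (0 : ℝ) < lam := by linarith
  set p := bracket m ξ with hp
  set q := bracket m η with hq
  -- bounds on p, q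
  have hpx : ‖ξ‖ ≤ p := by
    have h := Real.sqrt_le_sqrt (show ‖ξ‖^2 ≤ m^2 + ‖ξ‖^2 by nlinarith)
    rwa [Real.sqrt_sq (norm_nonneg ξ)] at h
  have hqx : ‖η‖ ≤ q := by
    have h := Real.sqrt_le_sqrt (show ‖η‖^2 ≤ m^2 + ‖η‖^2 by nlinarith)
    rwa [Real.sqrt_sq (norm_nonneg η)] at h
  have hp_lb : lam ≤ p := le_trans hξ1 hpx
  have hq_lb : lam ≤ q := le_trans hη1 hqx
  have hp0 : 0 < p := lt_of_lt_of_le hlam0 hp_lb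
  have hq0 : 0 < q := lt_of_lt_of_le hlam0 hq_lb
  have hp_ub : p ≤ 3 * lam := by
    have h := Real.sqrt_le_sqrt (show m^2 + ‖ξ‖^2 ≤ (3*lam)^2 by nlinarith [norm_nonneg ξ])
    rwa [Real.sqrt_sq (by linarith)] at h
  have hq_ub : q ≤ 3 * lam := by
    have h := Real.sqrt_le_sqrt (show m^2 + ‖η‖^2 ≤ (3*lam)^2 by nlinarith [norm_nonneg η])
    rwa [Real.sqrt_sq (by linarith)] at h
  -- bounds on the phases
  set A := τ * p with hA
  set B := t * q with hB
  have hlamne : lam ≠ 0 := ne_of_gt hlam0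
  have hεlam : ε / lam * (3 * lam) = 3 * ε := by field_simp
  have hA3 : |A| ≤ 3 * ε := by
    rw [hA, abs_mul, abs_of_pos hp0]
    calc |τ| * p ≤ ε / lam * (3 * lam) := by
          apply mul_le_mul hτ hp_ub hp0.le (by positivity)
      _ = 3 * ε := hεlam
  have hB3 : |B| ≤ 3 * ε := by
    rw [hB, abs_mul, abs_of_pos hq0]
    calc |t| * q ≤ ε / lam * (3 * lam) := by
          apply mul_le_mul ht hq_ub hq0.le (by positivity)
      _ = 3 * ε := hεlam
  have hA2 : A ^ 2 ≤ 9 * ε ^ 2 := by nlinarith [_root_.sq_abs A, abs_nonneg A]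
  have hB2 : B ^ 2 ≤ 9 * ε ^ 2 := by nlinarith [_root_.sq_abs B, abs_nonneg B]
  have hcA : 1 - 9 * ε ^ 2 / 2 ≤ Real.cos A := by
    have := Real.one_sub_sq_div_two_le_cos (x := A); linarith
  have hcB : 1 - 9 * ε ^ 2 / 2 ≤ Real.cos B := by
    have := Real.one_sub_sq_div_two_le_cos (x := B); linarith
  have hsA : |Real.sin A| ≤ 3 * ε := le_trans (Real.abs_sin_le_abs) hA3
  have hsB : |Real.sin B| ≤ 3 * ε := le_trans (Real.abs_sin_le_abs) hB3
  -- inner product bound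
  set d := ξ 0 * η 0 + ξ 1 * η 1 + ξ 2 * η 2 with hd
  have hdinner : d = (inner ℝ ξ η : ℝ) := by
    simp [PiLp.inner_apply, RCLike.inner_apply, Fin.sum_univ_three, hd]; ring
  have hdn : |d| ≤ ‖ξ‖ * ‖η‖ := by rw [hdinner]; exact abs_real_inner_le_norm ξ η
  have hpq : m ^ 2 + ‖ξ‖ * ‖η‖ ≤ p * q := by
    have hpqeq : p * q = Real.sqrt ((m^2 + ‖ξ‖^2) * (m^2 + ‖η‖^2)) := by
      rw [hp, hq]; unfold bracket; rw [← Real.sqrt_mul (by positivity)]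
    rw [hpqeq]
    calc m ^ 2 + ‖ξ‖ * ‖η‖ = Real.sqrt ((m^2 + ‖ξ‖*‖η‖)^2) :=
          (Real.sqrt_sq (by positivity)).symm
      _ ≤ _ := by
          apply Real.sqrt_le_sqrt
          have hexp : (m^2 + ‖ξ‖^2) * (m^2 + ‖η‖^2)
              = (m^2 + ‖ξ‖*‖η‖)^2 + m^2*(‖ξ‖-‖η‖)^2 := by ring
          have hnn : 0 ≤ m^2*(‖ξ‖-‖η‖)^2 := mul_nonneg (sq_nonneg m) (sq_nonneg _)
          linarith
  have hdm : |d - m ^ 2| ≤ p * q := by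
    have h1 := abs_sub_abs_le_abs_sub d (m^2 : ℝ)
    have h2 : |d - m^2| ≤ |d| + |(m^2 : ℝ)| := abs_sub _ _
    rw [_root_.abs_of_nonneg (by positivity : (0:ℝ) ≤ m^2)] at h2
    linarith
  -- cross term lower bound
  have hcross : -(9 * ε ^ 2) ≤ p⁻¹ * q⁻¹ * Real.sin A * Real.sin B * (d - m ^ 2) := by
    have habs : |Real.sin A * Real.sin B * (d - m ^ 2)| ≤ 9 * ε ^ 2 * (p * q) := by
      calc |Real.sin A * Real.sin B * (d - m ^ 2)|
          = |Real.sin A| * |Real.sin B| * |d - m ^ 2| := by rw [abs_mul, abs_mul]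
        _ ≤ (3 * ε) * (3 * ε) * (p * q) := by
            apply mul_le_mul (mul_le_mul hsA hsB (abs_nonneg _) (by positivity))
              hdm (abs_nonneg _) (by positivity)
        _ = 9 * ε ^ 2 * (p * q) := by ring
    have hkey : -(9 * ε ^ 2 * (p * q)) ≤ Real.sin A * Real.sin B * (d - m ^ 2) := by
      have := neg_abs_le (Real.sin A * Real.sin B * (d - m ^ 2)); linarith
    have heq : p⁻¹ * q⁻¹ * Real.sin A * Real.sin B * (d - m ^ 2)
        = (Real.sin A * Real.sin B * (d - m ^ 2)) / (p * q) := by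
      field_simp
    rw [heq, le_div_iff₀ (by positivity)]
    linarith
  -- conclude
  rw [entry_re_eq]
  have h0 : (0:ℝ) ≤ 1 - 9 * ε ^ 2 / 2 := by nlinarith
  have hprod := mul_le_mul hcA hcB h0 (le_trans h0 hcA)
  rw [← hp, ← hq, ← hA, ← hB, ← hd]
  nlinarith [hprod, hcross]
end
end

section
/- (Geometric lower bound for the convolution integral in the ill-posedness argument.) There exists a constant c > 0 such that for every λ ≥ 1 and every ξ ∈ ℝ³ with λ ≤ |ξ| ≤ 2λ, ∫_{ℝ³} ∫_{ℝ³} (1 + |η|)⁻² · 𝟙_{W_λ}(η − σ) · 𝟙_{W_λ}(σ) · 𝟙_{W_λ}(ξ − η) dσ dη ≥ c · λ⁴, where W_λ = { x ∈ ℝ³ : λ ≤ |x| ≤ 2λ } and 𝟙_{W_λ} is its indicator function. -/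
noncomputable section
open Matrix Complex MeasureTheory

/-- The indicator function of the annulus W_λ = {x : λ ≤ |x| ≤ 2λ}. -/
def annulusInd (lam : ℝ) (y : E3) : ℝ :=
  Set.indicator {x : E3 | lam ≤ ‖x‖ ∧ ‖x‖ ≤ 2 * lam} (fun _ => (1 : ℝ)) y

set_option maxHeartbeats 1000000

/-- geometric lower bound c·λ⁴ for the convolution integral in the
ill-posedness argument. -/
theorem convolution_integral_lower_bound :
    ∃ c > (0 : ℝ), ∀ lam : ℝ, 1 ≤ lam → ∀ ξ : E3, lam ≤ ‖ξ‖ → ‖ξ‖ ≤ 2 * lam →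
      c * lam ^ 4 ≤ ∫ η : E3, ∫ σ : E3,
        ((1 + ‖η‖) ^ 2)⁻¹ * annulusInd lam (η - σ) * annulusInd lam σ
          * annulusInd lam (ξ - η) := by
  classical
  have hVball : volume (Metric.ball (0:E3) 1) ≠ ⊤ := measure_ball_lt_top.ne
  set Vr : ℝ := (volume (Metric.ball (0:E3) 1)).toReal with hVrdef
  have hVr_pos : 0 < Vr :=
    ENNReal.toReal_pos (Metric.measure_ball_pos volume 0 one_pos).ne' hVball
  refine ⟨Vr ^ 2 / (4 * 16 ^ 6), by positivity, ?_⟩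
  intro lam hlam ξ hξl hξu
  have hlam0 : (0:ℝ) < lam := by linarith
  have hξ0 : ‖ξ‖ ≠ 0 := by intro h; rw [h] at hξl; linarith
  set f : E3 → E3 → ℝ := fun η σ =>
    ((1 + ‖η‖) ^ 2)⁻¹ * annulusInd lam (η - σ) * annulusInd lam σ
      * annulusInd lam (ξ - η) with hfdef
  show Vr ^ 2 / (4 * 16 ^ 6) * lam ^ 4 ≤ ∫ η : E3, ∫ σ : E3, f η σ
  -- basic indicator facts
  have hW : MeasurableSet {x : E3 | lam ≤ ‖x‖ ∧ ‖x‖ ≤ 2 * lam} := by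
    have h : {x : E3 | lam ≤ ‖x‖ ∧ ‖x‖ ≤ 2 * lam}
        = {x : E3 | lam ≤ ‖x‖} ∩ {x : E3 | ‖x‖ ≤ 2 * lam} := rfl
    rw [h]
    exact ((isClosed_le continuous_const continuous_norm).measurableSet).inter
      ((isClosed_le continuous_norm continuous_const).measurableSet)
  have hind_nonneg : ∀ y : E3, 0 ≤ annulusInd lam y := fun y =>
    Set.indicator_nonneg (fun _ _ => zero_le_one) y
  have hind_le_one : ∀ y : E3, annulusInd lam y ≤ 1 := by
    intro y
    unfold annulusInd
    by_cases h : y ∈ {x : E3 | lam ≤ ‖x‖ ∧ ‖x‖ ≤ 2 * lam}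
    · rw [Set.indicator_of_mem h]
    · rw [Set.indicator_of_notMem h]; norm_num
  have hind_one : ∀ y : E3, lam ≤ ‖y‖ → ‖y‖ ≤ 2 * lam → annulusInd lam y = 1 :=
    fun y h1 h2 => Set.indicator_of_mem (Set.mem_setOf.mpr ⟨h1, h2⟩) _
  have hind_zero : ∀ y : E3, 2 * lam < ‖y‖ → annulusInd lam y = 0 := by
    intro y hy
    exact Set.indicator_of_notMem (fun h => absurd h.2 (not_le.mpr hy)) _
  have hf_nonneg : ∀ η σ, 0 ≤ f η σ := by
    intro η σ
    exact mul_nonneg (mul_nonneg (mul_nonneg (by positivity) (hind_nonneg _))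
      (hind_nonneg _)) (hind_nonneg _)
  -- geometry setup
  set u : E3 := ‖ξ‖⁻¹ • ξ with hudef
  have hnu : ‖u‖ = 1 := by
    rw [hudef, norm_smul, norm_inv, norm_norm, inv_mul_cancel₀ hξ0]
  have hLu : ‖ξ‖ • u = ξ := by
    rw [hudef, smul_smul, mul_inv_cancel₀ hξ0, one_smul]
  have hnsmul : ∀ r : ℝ, ‖r • u‖ = |r| := fun r => by
    rw [norm_smul, hnu, mul_one, Real.norm_eq_abs]
  set ηc : E3 := (‖ξ‖ - 3/2 * lam) • u with hηcdef
  set σc : E3 := (‖ξ‖/2 - 9/4 * lam) • u with hσcdef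
  set A := Metric.ball ηc (lam/16) with hAdef
  set B := Metric.ball σc (lam/16) with hBdef
  have hξηc : ξ - ηc = (3/2 * lam) • u := by
    rw [hηcdef, sub_smul, hLu]; abel
  have hnξηc : ‖ξ - ηc‖ = 3/2 * lam := by
    rw [hξηc, hnsmul, abs_of_pos (by linarith)]
  have hηcσc : ηc - σc = (‖ξ‖/2 + 3/4 * lam) • u := by
    rw [hηcdef, hσcdef, ← sub_smul]
    congr 1
    ring
  have hnηcσc : ‖ηc - σc‖ = ‖ξ‖/2 + 3/4 * lam := by
    rw [hηcσc, hnsmul, abs_of_pos (by linarith)]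
  have hnσc : ‖σc‖ = 9/4 * lam - ‖ξ‖/2 := by
    rw [hσcdef, hnsmul, abs_of_neg (by linarith)]
    ring
  have hnηc : ‖ηc‖ ≤ lam/2 := by
    rw [hηcdef, hnsmul, abs_le]
    constructor <;> linarith
  -- geometric facts about the balls
  have hA_facts : ∀ η ∈ A, (lam ≤ ‖ξ - η‖ ∧ ‖ξ - η‖ ≤ 2 * lam) ∧ ‖η‖ ≤ lam := by
    intro η hη
    have hd : ‖η - ηc‖ < lam/16 := by
      rw [← dist_eq_norm]; exact Metric.mem_ball.mp hη
    have e1 : ‖ξ - η‖ ≤ ‖ξ - ηc‖ + ‖ηc - η‖ := by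
      calc ‖ξ - η‖ = ‖(ξ - ηc) + (ηc - η)‖ := by congr 1; abel
        _ ≤ _ := norm_add_le _ _
    have e2 : ‖ξ - ηc‖ ≤ ‖ξ - η‖ + ‖η - ηc‖ := by
      calc ‖ξ - ηc‖ = ‖(ξ - η) + (η - ηc)‖ := by congr 1; abel
        _ ≤ _ := norm_add_le _ _
    have e3 : ‖ηc - η‖ = ‖η - ηc‖ := norm_sub_rev _ _
    have e4 : ‖η‖ ≤ ‖η - ηc‖ + ‖ηc‖ := by
      calc ‖η‖ = ‖(η - ηc) + ηc‖ := by congr 1; abel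
        _ ≤ _ := norm_add_le _ _
    rw [hnξηc] at e1 e2
    exact ⟨⟨by linarith, by linarith⟩, by linarith⟩
  have hB_facts : ∀ σ ∈ B, lam ≤ ‖σ‖ ∧ ‖σ‖ ≤ 2 * lam := by
    intro σ hσ
    have hd : ‖σ - σc‖ < lam/16 := by
      rw [← dist_eq_norm]; exact Metric.mem_ball.mp hσ
    have e1 := abs_norm_sub_norm_le σ σc
    rw [abs_le] at e1
    constructor <;> (rw [hnσc] at e1; obtain ⟨e1a, e1b⟩ := e1; linarith)
  have hAB_facts : ∀ η ∈ A, ∀ σ ∈ B, lam ≤ ‖η - σ‖ ∧ ‖η - σ‖ ≤ 2 * lam := by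
    intro η hη σ hσ
    have hd1 : ‖η - ηc‖ < lam/16 := by
      rw [← dist_eq_norm]; exact Metric.mem_ball.mp hη
    have hd2 : ‖σ - σc‖ < lam/16 := by
      rw [← dist_eq_norm]; exact Metric.mem_ball.mp hσ
    have e0 : ‖(η - σ) - (ηc - σc)‖ ≤ ‖η - ηc‖ + ‖σ - σc‖ := by
      calc ‖(η - σ) - (ηc - σc)‖ = ‖(η - ηc) - (σ - σc)‖ := by congr 1; abel
        _ ≤ _ := norm_sub_le _ _
    have e1 := abs_norm_sub_norm_le (η - σ) (ηc - σc)
    rw [abs_le] at e1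
    obtain ⟨e1a, e1b⟩ := e1
    rw [hnηcσc] at e1a e1b
    constructor <;> linarith
  -- measurability
  have hmeasInd : Measurable (annulusInd lam) := measurable_const.indicator hW
  have hFm : Measurable (fun p : E3 × E3 =>
      ((1 + ‖p.1‖) ^ 2)⁻¹ * annulusInd lam (p.1 - p.2) * annulusInd lam p.2
        * annulusInd lam (ξ - p.1)) := by
    refine Measurable.mul (Measurable.mul (Measurable.mul ?_ ?_) ?_) ?_
    · exact ((measurable_const.add measurable_fst.norm).pow_const 2).inv
    · exact hmeasInd.comp (measurable_fst.sub measurable_snd)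
    · exact hmeasInd.comp measurable_snd
    · exact hmeasInd.comp (measurable_const.sub measurable_fst)
  have hfm_right : ∀ η : E3, AEStronglyMeasurable (f η) volume := by
    intro η
    exact (hFm.comp measurable_prodMk_left).aestronglyMeasurable
  -- inner integrability
  have hCB2 : Integrable ((Metric.closedBall (0:E3) (2*lam)).indicator
      fun _ => (1:ℝ)) := by
    rw [integrable_indicator_iff measurableSet_closedBall]
    exact integrableOn_const measure_closedBall_lt_top.ne
  have hf_le_ind : ∀ η σ, f η σ ≤
      (Metric.closedBall (0:E3) (2*lam)).indicator (fun _ => (1:ℝ)) σ := by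
    intro η σ
    have a1 : ((1 + ‖η‖) ^ 2)⁻¹ ≤ 1 := by
      apply inv_le_one_of_one_le₀
      nlinarith [norm_nonneg η]
    have hab : ((1 + ‖η‖) ^ 2)⁻¹ * annulusInd lam (η - σ) ≤ 1 :=
      mul_le_one₀ a1 (hind_nonneg _) (hind_le_one _)
    have h1 : f η σ ≤ annulusInd lam σ := by
      calc f η σ = ((1 + ‖η‖) ^ 2)⁻¹ * annulusInd lam (η - σ) * annulusInd lam σ
            * annulusInd lam (ξ - η) := rfl
        _ ≤ 1 * annulusInd lam σ * annulusInd lam (ξ - η) :=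
            mul_le_mul_of_nonneg_right
              (mul_le_mul_of_nonneg_right hab (hind_nonneg _)) (hind_nonneg _)
        _ = annulusInd lam σ * annulusInd lam (ξ - η) := by ring
        _ ≤ annulusInd lam σ := mul_le_of_le_one_right (hind_nonneg _) (hind_le_one _)
    refine h1.trans ?_
    have hsub : {x : E3 | lam ≤ ‖x‖ ∧ ‖x‖ ≤ 2 * lam} ⊆
        Metric.closedBall (0:E3) (2*lam) := by
      intro x hx
      simpa [Metric.mem_closedBall, dist_zero_right] using hx.2
    exact Set.indicator_le_indicator_of_subset hsub (fun _ => zero_le_one) σ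
  have hInt_inner : ∀ η, Integrable (f η) := by
    intro η
    refine hCB2.mono' (hfm_right η) (Filter.Eventually.of_forall fun σ => ?_)
    rw [Real.norm_eq_abs, _root_.abs_of_nonneg (hf_nonneg η σ)]
    exact hf_le_ind η σ
  -- pointwise lower bound on the inner integral
  have hKey : ∀ η : E3,
      A.indicator (fun _ => ((2*lam)^2)⁻¹ * (volume B).toReal) η ≤ ∫ σ, f η σ := by
    intro η
    by_cases hη : η ∈ A
    · rw [Set.indicator_of_mem hη]
      have hstep : ∫ σ, B.indicator (fun _ => ((2*lam)^2)⁻¹) σ ≤ ∫ σ, f η σ := by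
        apply integral_mono_of_nonneg
        · exact Filter.Eventually.of_forall fun σ =>
            Set.indicator_nonneg (fun _ _ => by positivity) σ
        · exact hInt_inner η
        · refine Filter.Eventually.of_forall fun σ => ?_
          by_cases hσ : σ ∈ B
          · rw [Set.indicator_of_mem hσ]
            obtain ⟨hσ1, hσ2⟩ := hB_facts σ hσ
            obtain ⟨hd1', hd2'⟩ := hAB_facts η hη σ hσ
            obtain ⟨⟨hx1, hx2⟩, hηn⟩ := hA_facts η hη
            show ((2*lam)^2)⁻¹ ≤ ((1 + ‖η‖) ^ 2)⁻¹ * annulusInd lam (η - σ)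
              * annulusInd lam σ * annulusInd lam (ξ - η)
            rw [hind_one _ hd1' hd2', hind_one _ hσ1 hσ2, hind_one _ hx1 hx2,
              mul_one, mul_one, mul_one]
            gcongr
            nlinarith [norm_nonneg η]
          · rw [Set.indicator_of_notMem hσ]
            exact hf_nonneg η σ
      calc ((2*lam)^2)⁻¹ * (volume B).toReal
          = ∫ σ, B.indicator (fun _ => ((2*lam)^2)⁻¹) σ := by
            rw [integral_indicator_const _ Metric.isOpen_ball.measurableSet,
              smul_eq_mul, mul_comm]
            rfl
        _ ≤ _ := hstep
    · rw [Set.indicator_of_notMem hη]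
      exact integral_nonneg (hf_nonneg η)
  -- outer integrability
  have hInnerMeas : AEStronglyMeasurable (fun η => ∫ σ, f η σ) volume :=
    (hFm.stronglyMeasurable.integral_prod_right').aestronglyMeasurable
  have hIF_le : ∀ η, ∫ σ, f η σ ≤
      (volume (Metric.closedBall (0:E3) (2*lam))).toReal := by
    intro η
    calc ∫ σ, f η σ
        ≤ ∫ σ, (Metric.closedBall (0:E3) (2*lam)).indicator (fun _ => (1:ℝ)) σ :=
          integral_mono_of_nonneg (Filter.Eventually.of_forall (hf_nonneg η)) hCB2
            (Filter.Eventually.of_forall (hf_le_ind η))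
      _ = (volume (Metric.closedBall (0:E3) (2*lam))).toReal := by
          rw [integral_indicator_const _ measurableSet_closedBall, smul_eq_mul, mul_one]
          rfl
  have hIF_zero : ∀ η, η ∉ Metric.closedBall ξ (2*lam) → ∫ σ, f η σ = 0 := by
    intro η hη
    have hfar : 2 * lam < ‖ξ - η‖ := by
      have : 2 * lam < dist η ξ := not_le.mp (fun h => hη (Metric.mem_closedBall.mpr h))
      rwa [dist_eq_norm, ← norm_sub_rev] at this
    have hz : ∀ σ, f η σ = 0 := by
      intro σ
      show ((1 + ‖η‖) ^ 2)⁻¹ * annulusInd lam (η - σ) * annulusInd lam σ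
        * annulusInd lam (ξ - η) = 0
      rw [hind_zero _ hfar, mul_zero]
    simp only [hz, integral_zero]
  have hInt_outer : Integrable (fun η => ∫ σ, f η σ) := by
    refine Integrable.mono'
      (g := (Metric.closedBall ξ (2*lam)).indicator
        fun _ => (volume (Metric.closedBall (0:E3) (2*lam))).toReal) ?_ hInnerMeas ?_
    · rw [integrable_indicator_iff measurableSet_closedBall]
      exact integrableOn_const measure_closedBall_lt_top.ne
    · refine Filter.Eventually.of_forall fun η => ?_
      rw [Real.norm_eq_abs, _root_.abs_of_nonneg (integral_nonneg (hf_nonneg η))]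
      by_cases hη : η ∈ Metric.closedBall ξ (2*lam)
      · rw [Set.indicator_of_mem hη]; exact hIF_le η
      · rw [Set.indicator_of_notMem hη, hIF_zero η hη]
  -- putting it together
  have hmain : ((2*lam)^2)⁻¹ * (volume B).toReal * (volume A).toReal
      ≤ ∫ η, ∫ σ, f η σ := by
    have h0 := integral_mono_of_nonneg
      (f := fun η => A.indicator (fun _ => ((2*lam)^2)⁻¹ * (volume B).toReal) η)
      (Filter.Eventually.of_forall fun η =>
        Set.indicator_nonneg (fun _ _ => by positivity) η)
      hInt_outer (Filter.Eventually.of_forall hKey)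
    rw [integral_indicator_const _ Metric.isOpen_ball.measurableSet, smul_eq_mul] at h0
    calc ((2*lam)^2)⁻¹ * (volume B).toReal * (volume A).toReal
        = (volume A).toReal * (((2*lam)^2)⁻¹ * (volume B).toReal) := by ring
      _ ≤ _ := h0
  -- volume computation
  have hvol : ∀ c : E3, (volume (Metric.ball c (lam/16))).toReal = (lam/16)^3 * Vr := by
    intro c
    rw [Measure.addHaar_ball volume c (by positivity : (0:ℝ) ≤ lam/16)]
    rw [show Module.finrank ℝ E3 = 3 from finrank_euclideanSpace_fin]
    rw [ENNReal.toReal_mul, ENNReal.toReal_ofReal (by positivity)]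
  have hvolA : (volume A).toReal = (lam/16)^3 * Vr := hvol ηc
  have hvolB : (volume B).toReal = (lam/16)^3 * Vr := hvol σc
  calc Vr ^ 2 / (4 * 16 ^ 6) * lam ^ 4
      = ((2*lam)^2)⁻¹ * ((lam/16)^3 * Vr) * ((lam/16)^3 * Vr) := by
        field_simp
        ring
    _ = ((2*lam)^2)⁻¹ * (volume B).toReal * (volume A).toReal := by
        rw [hvolA, hvolB]
    _ ≤ _ := hmain
end
end
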